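/- Let p be a prime and H a nontrivial closed subgroup of T^{p-1} ≤ Γ_p. Then dim_ℝ U_1^H ≤ dim_ℝ U_p^H, where U_k = Ind_{T^{p-1}}^{Γ_p} of the character t ↦ t_1^k. Specifically, dim_ℝ U_p^H = dim_ℝ U_1^{H^p} ≥ dim_ℝ U_1^H, where H^p = {t^p : t ∈ H}. -/

import Mathlib

/-- The character of the torus `T^{p-1} = Fin (p-1) → Circle` by which `t ∈ T^{p-1}` acts
on the `i`-th coordinate of `U_k = Ind_{T^{p-1}}^{Γ_p}(t ↦ t_1^k) ≅ (Fin p → ℂ)`: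
by formula (3.2) of the paper,
`t · (z_0, …, z_{p-1}) = (t_1^k z_0, t_1^{-k} t_2^k z_1, …, t_{p-2}^{-k} t_{p-1}^k z_{p-2}, t_{p-1}^{-k} z_{p-1})`. -/
noncomputable def chiU (p : ℕ) (hp : 1 < p) (k : ℤ) (i : Fin p)
    (t : Fin (p - 1) → Circle) : Circle :=
  if h0 : (i : ℕ) = 0 then (t ⟨0, by omega⟩) ^ k
  else if hl : (i : ℕ) = p - 1 then (t ⟨p - 2, by omega⟩) ^ (-k)
  else (t ⟨(i : ℕ) - 1, by have := i.isLt; omega⟩) ^ (-k) *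
    (t ⟨(i : ℕ), by have := i.isLt; omega⟩) ^ k

/-- The action of `t ∈ T^{p-1}` on `U_k ≅ (Fin p → ℂ)`, as a real-linear map:
coordinatewise multiplication by the characters `chiU`. -/
noncomputable def actU (p : ℕ) (hp : 1 < p) (k : ℤ) (t : Fin (p - 1) → Circle) :
    (Fin p → ℂ) →ₗ[ℝ] (Fin p → ℂ) :=
  LinearMap.pi fun i => ((chiU p hp k i t : ℂ)) • LinearMap.proj i

/-- The fixed-point subspace `U_k^H` for a subgroup `H ≤ T^{p-1}`. -/
noncomputable def fixU (p : ℕ) (hp : 1 < p) (k : ℤ)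
    (H : Subgroup (Fin (p - 1) → Circle)) : Submodule ℝ (Fin p → ℂ) :=
  ⨅ t ∈ H, LinearMap.ker (actU p hp k t - LinearMap.id)


lemma chiU_pow (p : ℕ) (hp : 1 < p) (i : Fin p) (t : Fin (p - 1) → Circle) :
    chiU p hp (p : ℤ) i t = chiU p hp 1 i (t ^ p) := by
  unfold chiU
  split_ifs <;>
    simp [Pi.pow_apply, zpow_neg, zpow_natCast]

lemma actU_pow (p : ℕ) (hp : 1 < p) (t : Fin (p - 1) → Circle) :
    actU p hp (p : ℤ) t = actU p hp 1 (t ^ p) := by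
  unfold actU
  simp [chiU_pow]

lemma fixU_anti (p : ℕ) (hp : 1 < p) (k : ℤ) {H H' : Subgroup (Fin (p - 1) → Circle)}
    (h : H' ≤ H) : fixU p hp k H ≤ fixU p hp k H' := by
  refine le_iInf fun t => le_iInf fun ht => ?_
  exact iInf_le_of_le t (iInf_le_of_le (h ht) le_rfl)

lemma fixU_pow (p : ℕ) (hp : 1 < p) (H : Subgroup (Fin (p - 1) → Circle)) :
    fixU p hp (p : ℤ) H = fixU p hp 1 (H.map (powMonoidHom p)) := by
  unfold fixU
  apply le_antisymm
  · refine le_iInf fun s => le_iInf fun hs => ?_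
    obtain ⟨t, ht, rfl⟩ := hs
    refine iInf_le_of_le t (iInf_le_of_le ht ?_)
    rw [powMonoidHom_apply, ← actU_pow]
  · refine le_iInf fun t => le_iInf fun ht => ?_
    refine iInf_le_of_le (t ^ p) (iInf_le_of_le ⟨t, ht, rfl⟩ ?_)
    rw [actU_pow]

/-- Let `p` be a prime and `H` a nontrivial closed subgroup of
`T^{p-1} ≤ Γ_p`.  Then `dim_ℝ U_1^H ≤ dim_ℝ U_p^H`; more specifically,
`dim_ℝ U_p^H = dim_ℝ U_1^{H^p} ≥ dim_ℝ U_1^H`, where `H^p = {t^p : t ∈ H}`. -/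
theorem stmt_17 (p : ℕ) (hp : p.Prime)
    (H : Subgroup (Fin (p - 1) → Circle)) (hne : H ≠ ⊥)
    (hclosed : IsClosed (H : Set (Fin (p - 1) → Circle))) :
    Module.finrank ℝ (fixU p hp.one_lt (p : ℤ) H) =
        Module.finrank ℝ (fixU p hp.one_lt 1 (H.map (powMonoidHom p)))
    ∧ Module.finrank ℝ (fixU p hp.one_lt 1 (H.map (powMonoidHom p))) ≥
        Module.finrank ℝ (fixU p hp.one_lt 1 H)
    ∧ Module.finrank ℝ (fixU p hp.one_lt 1 H) ≤
        Module.finrank ℝ (fixU p hp.one_lt (p : ℤ) H) := by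
  have h1 : fixU p hp.one_lt (p : ℤ) H = fixU p hp.one_lt 1 (H.map (powMonoidHom p)) :=
    fixU_pow p hp.one_lt H
  have hle : H.map (powMonoidHom p) ≤ H := by
    rintro s ⟨t, ht, rfl⟩
    exact pow_mem ht p
  have h2 : fixU p hp.one_lt 1 H ≤ fixU p hp.one_lt 1 (H.map (powMonoidHom p)) :=
    fixU_anti p hp.one_lt 1 hle
  have h2' := Submodule.finrank_mono h2
  exact ⟨by rw [h1], h2', by rw [h1]; exact h2'⟩
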